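/- Let X ∈ ℝ^{n×d} have smallest singular value α > 0 (full column rank), y ∈ ℝⁿ, and for λ > 0 let w(λ) = argmin_w (1/2)‖Xw − y‖₂² + λ‖w‖₁. Then for any 0 < λ₁ ≤ λ₂, ‖w(λ₂) − w(λ₁)‖₂ ≤ (√d/α²)·(λ₂ − λ₁). -/

import Mathlib

noncomputable def euclNorm {d : ℕ} (v : Fin d → ℝ) : ℝ := Real.sqrt (∑ i, v i ^ 2)

/-- The Lasso objective (1/2)‖Xw − y‖₂² + λ‖w‖₁. -/
noncomputable def lassoObj {n d : ℕ} (X : Matrix (Fin n) (Fin d) ℝ) (y : Fin n → ℝ)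
    (l : ℝ) (w : Fin d → ℝ) : ℝ :=
  (1 / 2) * euclNorm (X.mulVec w - y) ^ 2 + l * ∑ i, |w i|

lemma euclNorm_sq {d : ℕ} (v : Fin d → ℝ) : euclNorm v ^ 2 = ∑ i, v i ^ 2 :=
  Real.sq_sqrt (Finset.sum_nonneg fun i _ => sq_nonneg _)

lemma sq_le_of_sqrt_le {α q1 q2 : ℝ} (hα : 0 ≤ α) (h1 : 0 ≤ q1) (h2 : 0 ≤ q2)
    (h : α * Real.sqrt q1 ≤ Real.sqrt q2) : α ^ 2 * q1 ≤ q2 := by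
  have h0 : 0 ≤ α * Real.sqrt q1 := mul_nonneg hα (Real.sqrt_nonneg q1)
  nlinarith [Real.sq_sqrt h1, Real.sq_sqrt h2,
    mul_le_mul h h h0 (Real.sqrt_nonneg q2)]

/-- Strong-convexity lower bound at the minimizer. -/
lemma lasso_strong_min {n d : ℕ} (X : Matrix (Fin n) (Fin d) ℝ) (y : Fin n → ℝ) (α : ℝ)
    (hα : 0 < α) (hmin : ∀ v : Fin d → ℝ, α * euclNorm v ≤ euclNorm (X.mulVec v))
    (l : ℝ) (hl : 0 ≤ l) (u v : Fin d → ℝ)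
    (hu : ∀ z, lassoObj X y l u ≤ lassoObj X y l z) :
    lassoObj X y l u + α ^ 2 / 2 * ∑ i, (v i - u i) ^ 2 ≤ lassoObj X y l v := by
  set A : Fin n → ℝ := X.mulVec u - y with hA
  set B : Fin n → ℝ := X.mulVec v - y with hB
  -- strong convexity constant
  have hXlb : α ^ 2 * ∑ i, (v i - u i) ^ 2 ≤ ∑ i, (B i - A i) ^ 2 := by
    have h := hmin (v - u)
    have hBA : ∀ i, B i - A i = (X.mulVec (v - u)) i := by
      intro i
      simp [hA, hB, Matrix.mulVec_sub, Pi.sub_apply]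
    have hle := sq_le_of_sqrt_le (α := α) hα.le (q1 := ∑ i, (v i - u i) ^ 2)
      (q2 := ∑ i, (X.mulVec (v - u)) i ^ 2)
      (Finset.sum_nonneg fun i _ => sq_nonneg _)
      (Finset.sum_nonneg fun i _ => sq_nonneg _) (by simpa [euclNorm] using h)
    calc α ^ 2 * ∑ i, (v i - u i) ^ 2 ≤ ∑ i, (X.mulVec (v - u)) i ^ 2 := hle
      _ = ∑ i, (B i - A i) ^ 2 := by
          apply Finset.sum_congr rfl; intro i _; rw [hBA i]
  -- convex combination inequality for t ∈ (0,1)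
  have key : ∀ t : ℝ, 0 < t → t < 1 →
      lassoObj X y l u + α ^ 2 / 2 * ∑ i, (v i - u i) ^ 2
        ≤ lassoObj X y l v + t * (α ^ 2 / 2 * ∑ i, (v i - u i) ^ 2) := by
    intro t ht0 ht1
    have hm := hu (u + t • (v - u))
    have hlin : X.mulVec (u + t • (v - u)) - y = fun i => A i + t * (B i - A i) := by
      funext i
      simp [hA, hB, Matrix.mulVec_add, Matrix.mulVec_smul, Matrix.mulVec_sub,
        Pi.sub_apply, Pi.add_apply, Pi.smul_apply, smul_eq_mul]
      ring
    have hQm : euclNorm (X.mulVec (u + t • (v - u)) - y) ^ 2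
        = (1 - t) * ∑ i, A i ^ 2 + t * ∑ i, B i ^ 2 - t * (1 - t) * ∑ i, (B i - A i) ^ 2 := by
      rw [hlin, euclNorm_sq]
      simp only [Finset.mul_sum, ← Finset.sum_add_distrib, ← Finset.sum_sub_distrib]
      apply Finset.sum_congr rfl; intro i _; ring
    have hSm : ∑ i, |(u + t • (v - u)) i| ≤ (1 - t) * ∑ i, |u i| + t * ∑ i, |v i| := by
      simp only [Finset.mul_sum, ← Finset.sum_add_distrib]
      apply Finset.sum_le_sum
      intro i _
      have he : (u + t • (v - u)) i = (1 - t) * u i + t * v i := by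
        simp [Pi.add_apply, Pi.sub_apply, Pi.smul_apply, smul_eq_mul]; ring
      rw [he]
      calc |(1 - t) * u i + t * v i| ≤ |(1 - t) * u i| + |t * v i| := abs_add_le _ _
        _ = (1 - t) * |u i| + t * |v i| := by
            rw [abs_mul, abs_mul, abs_of_nonneg (by linarith), abs_of_nonneg ht0.le]
    have hm' : lassoObj X y l u ≤
        (1 - t) * lassoObj X y l u + t * lassoObj X y l v
          - t * (1 - t) / 2 * ∑ i, (B i - A i) ^ 2 := by
      refine hm.trans ?_
      unfold lassoObj
      rw [hQm, euclNorm_sq, euclNorm_sq]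
      have := mul_le_mul_of_nonneg_left hSm hl
      nlinarith [this]
    have hprod : t * (1 - t) / 2 * (α ^ 2 * ∑ i, (v i - u i) ^ 2)
        ≤ t * (1 - t) / 2 * ∑ i, (B i - A i) ^ 2 :=
      mul_le_mul_of_nonneg_left hXlb (by nlinarith)
    have hfinal : t * (lassoObj X y l u + α ^ 2 / 2 * ∑ i, (v i - u i) ^ 2)
        ≤ t * (lassoObj X y l v + t * (α ^ 2 / 2 * ∑ i, (v i - u i) ^ 2)) := by
      nlinarith [hm', hprod]
    exact le_of_mul_le_mul_left hfinal ht0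
  -- epsilon argument
  by_contra hcon
  push_neg at hcon
  set c : ℝ := α ^ 2 / 2 * ∑ i, (v i - u i) ^ 2 with hc
  have huv := hu v
  have hc0 : 0 < c := by linarith
  set t : ℝ := (lassoObj X y l u + c - lassoObj X y l v) / (2 * c) with ht
  have ht0 : 0 < t := div_pos (by linarith) (by linarith)
  have ht1 : t < 1 := by
    rw [ht, div_lt_one (by linarith)]
    linarith
  have hk := key t ht0 ht1
  have htc : t * c = (lassoObj X y l u + c - lassoObj X y l v) / 2 := by
    rw [ht]
    field_simp
  rw [htc] at hk
  linarith

lemma l1_le_sqrt_card_mul {d : ℕ} (v : Fin d → ℝ) :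
    ∑ i, |v i| ≤ Real.sqrt d * Real.sqrt (∑ i, v i ^ 2) := by
  have h1 : (∑ i, |v i|) ^ 2 ≤ (d : ℝ) * ∑ i, v i ^ 2 := by
    have := sq_sum_le_card_mul_sum_sq (s := Finset.univ) (f := fun i => |v i|)
    simpa [sq_abs, Finset.card_univ, Fintype.card_fin] using this
  have hnn : 0 ≤ ∑ i, |v i| := Finset.sum_nonneg fun i _ => abs_nonneg _
  calc ∑ i, |v i| = Real.sqrt ((∑ i, |v i|) ^ 2) := (Real.sqrt_sq hnn).symm
    _ ≤ Real.sqrt ((d : ℝ) * ∑ i, v i ^ 2) := Real.sqrt_le_sqrt h1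
    _ = Real.sqrt d * Real.sqrt (∑ i, v i ^ 2) := Real.sqrt_mul (Nat.cast_nonneg d) _

/-- Lipschitzness of the Lasso path with constant √d/α². -/
theorem stmt_3 {n d : ℕ} (X : Matrix (Fin n) (Fin d) ℝ) (y : Fin n → ℝ) (α : ℝ)
    (hα : 0 < α) (hmin : ∀ v : Fin d → ℝ, α * euclNorm v ≤ euclNorm (X.mulVec v))
    (w : ℝ → (Fin d → ℝ))
    (hw : ∀ l : ℝ, 0 < l → ∀ v : Fin d → ℝ, lassoObj X y l (w l) ≤ lassoObj X y l v)
    (l₁ l₂ : ℝ) (hl₁ : 0 < l₁) (hl₁₂ : l₁ ≤ l₂) :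
    euclNorm (w l₂ - w l₁) ≤ Real.sqrt d / α ^ 2 * (l₂ - l₁) := by
  set a := w l₁ with ha
  set b := w l₂ with hb
  have hl₂ : 0 < l₂ := lt_of_lt_of_le hl₁ hl₁₂
  have h1 := lasso_strong_min X y α hα hmin l₁ hl₁.le a b (hw l₁ hl₁)
  have h2 := lasso_strong_min X y α hα hmin l₂ hl₂.le b a (hw l₂ hl₂)
  have hsym : ∑ i, (a i - b i) ^ 2 = ∑ i, (b i - a i) ^ 2 := by
    apply Finset.sum_congr rfl; intro i _; ring
  rw [hsym] at h2
  set Q : ℝ := ∑ i, (b i - a i) ^ 2 with hQ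
  have hQ0 : 0 ≤ Q := Finset.sum_nonneg fun i _ => sq_nonneg _
  -- combine the two strong-minimality inequalities
  have hmain : α ^ 2 * Q ≤ (l₂ - l₁) * (∑ i, |a i| - ∑ i, |b i|) := by
    unfold lassoObj at h1 h2
    nlinarith [h1, h2]
  have hS : ∑ i, |a i| - ∑ i, |b i| ≤ ∑ i, |b i - a i| := by
    rw [← Finset.sum_sub_distrib]
    apply Finset.sum_le_sum
    intro i _
    calc |a i| - |b i| ≤ |a i - b i| := abs_sub_abs_le_abs_sub _ _
      _ = |b i - a i| := abs_sub_comm _ _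
  have hCS : ∑ i, |b i - a i| ≤ Real.sqrt d * Real.sqrt Q :=
    l1_le_sqrt_card_mul (fun i => b i - a i)
  have hgoal : euclNorm (w l₂ - w l₁) = Real.sqrt Q := by
    rw [euclNorm]
    congr 1
  rw [hgoal]
  set D : ℝ := Real.sqrt Q with hD
  have hD0 : 0 ≤ D := Real.sqrt_nonneg _
  have hD2 : D ^ 2 = Q := Real.sq_sqrt hQ0
  have hK : 0 ≤ l₂ - l₁ := by linarith
  have hd0 : (0 : ℝ) ≤ Real.sqrt d := Real.sqrt_nonneg _
  have hchain : α ^ 2 * D ^ 2 ≤ (l₂ - l₁) * (Real.sqrt d * D) := by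
    rw [hD2]
    calc α ^ 2 * Q ≤ (l₂ - l₁) * (∑ i, |a i| - ∑ i, |b i|) := hmain
      _ ≤ (l₂ - l₁) * (Real.sqrt d * D) := by
          apply mul_le_mul_of_nonneg_left _ hK
          exact hS.trans hCS
  rcases eq_or_lt_of_le hD0 with hDz | hDp
  · rw [← hDz]
    apply mul_nonneg (div_nonneg hd0 (by positivity)) hK
  · rw [div_mul_eq_mul_div, le_div_iff₀ (by positivity)]
    nlinarith [hchain, hDp]
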